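/- Let 0 < a ≤ b and 0 < ε < a/12. Then the function r ↦ 4a(a¹²/r¹² − b⁶/r⁶) − 4εa·|12a¹¹/r¹² − 6b⁵/r⁶| on (0,∞) is lower regular. -/

import Mathlib

/-- A function `f` on `(0,∞)` is lower regular if it is bounded below by `-ψ` for
some positive nonincreasing function `ψ` with `∫₀^∞ r·ψ(r) dr < ∞`. -/
def LowerRegular (f : ℝ → ℝ) : Prop :=
  ∃ ψ : ℝ → ℝ, (∀ r > (0 : ℝ), 0 < ψ r) ∧ AntitoneOn ψ (Set.Ioi 0) ∧
    MeasureTheory.IntegrableOn (fun r => r * ψ r) (Set.Ioi 0) ∧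
    ∀ r > (0 : ℝ), -ψ r ≤ f r

set_option maxHeartbeats 1000000 in
theorem stmt6 (a b ε : ℝ) (ha : 0 < a) (hab : a ≤ b) (hε0 : 0 < ε) (hε : ε < a / 12) :
    LowerRegular (fun r =>
      4 * a * (a ^ 12 / r ^ 12 - b ^ 6 / r ^ 6) -
        4 * ε * a * |12 * a ^ 11 / r ^ 12 - 6 * b ^ 5 / r ^ 6|) := by
  have hb : 0 < b := lt_of_lt_of_le ha hab
  set K : ℝ := 4 * a * b ^ 6 + 24 * ε * a * b ^ 5 with hKdef
  set P : ℝ := 4 * a ^ 12 * (a - 12 * ε) with hPdef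
  have hK : 0 < K := by positivity
  have hP : 0 < P := by
    have : 0 < a - 12 * ε := by linarith
    positivity
  set C : ℝ := 4 * (K ^ 2 / (4 * P) + K) with hCdef
  have hC : 0 < C := by positivity
  have hC4K : 4 * K ≤ C := by
    have : 0 ≤ K ^ 2 / (4 * P) := by positivity
    rw [hCdef]; linarith
  refine ⟨fun r => C / (1 + r ^ 2) ^ 2, ?_, ?_, ?_, ?_⟩
  · intro r hr; positivity
  · intro x hx y hy hxy
    have hx0 : (0:ℝ) < x := hx
    apply div_le_div_of_nonneg_left hC.le (by positivity)
    have hxy2 : x ^ 2 ≤ y ^ 2 := by nlinarith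
    nlinarith [sq_nonneg x, sq_nonneg y]
  · have hint : MeasureTheory.IntegrableOn
        (fun r : ℝ => r * (C / (1 + r ^ 2) ^ 2)) (Set.Ioi 0) := by
      apply MeasureTheory.integrableOn_Ioi_deriv_of_nonneg'
        (g := fun r : ℝ => -C / (2 * (1 + r ^ 2))) (l := 0)
      · intro x _
        have h1 : HasDerivAt (fun r : ℝ => 2 * (1 + r ^ 2)) (2 * (2 * x)) x := by
          have : HasDerivAt (fun r : ℝ => 1 + r ^ 2) (2 * x) x := by
            simpa using ((hasDerivAt_pow 2 x).const_add 1)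
          exact this.const_mul 2
        have h2 : (2 * (1 + x ^ 2)) ≠ 0 := by positivity
        have := (hasDerivAt_const x (-C)).div h1 h2
        refine this.congr_deriv ?_
        field_simp
        ring
      · intro x hx
        have hx0 : (0:ℝ) < x := hx
        positivity
      · have h1 : Filter.Tendsto (fun r : ℝ => 2 * (1 + r ^ 2)) Filter.atTop Filter.atTop := by
          apply Filter.Tendsto.const_mul_atTop (by norm_num : (0:ℝ) < 2)
          exact Filter.tendsto_atTop_add_const_left _ 1 (Filter.tendsto_pow_atTop (by norm_num : (2:ℕ) ≠ 0))
        have h2 : Filter.Tendsto (fun r : ℝ => (2 * (1 + r ^ 2))⁻¹) Filter.atTop (nhds 0) :=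
          Filter.Tendsto.inv_tendsto_atTop h1
        have := h2.const_mul (-C)
        simpa [div_eq_mul_inv] using this
    exact hint
  · intro r hr
    have hr0 : (0:ℝ) < r := hr
    have habs : |12 * a ^ 11 / r ^ 12 - 6 * b ^ 5 / r ^ 6| ≤
        12 * a ^ 11 / r ^ 12 + 6 * b ^ 5 / r ^ 6 := by
      refine (abs_sub _ _).trans ?_
      rw [abs_of_nonneg (by positivity), abs_of_nonneg (by positivity)]
    have hmul : 4 * ε * a * |12 * a ^ 11 / r ^ 12 - 6 * b ^ 5 / r ^ 6| ≤
        4 * ε * a * (12 * a ^ 11 / r ^ 12 + 6 * b ^ 5 / r ^ 6) :=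
      mul_le_mul_of_nonneg_left habs (by positivity)
    have hstep : P / r ^ 12 - K / r ^ 6 ≤
        4 * a * (a ^ 12 / r ^ 12 - b ^ 6 / r ^ 6) -
          4 * ε * a * |12 * a ^ 11 / r ^ 12 - 6 * b ^ 5 / r ^ 6| := by
      have heq : 4 * a * (a ^ 12 / r ^ 12 - b ^ 6 / r ^ 6) -
          4 * ε * a * (12 * a ^ 11 / r ^ 12 + 6 * b ^ 5 / r ^ 6) =
          P / r ^ 12 - K / r ^ 6 := by
        rw [hPdef, hKdef]; field_simp; ring
      linarith
    have hfinal : -(C / (1 + r ^ 2) ^ 2) ≤ P / r ^ 12 - K / r ^ 6 := by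
      rcases le_or_gt r 1 with h1 | h1
      · -- small r : use P t² - K t ≥ -K²/(4P) and C/(1+r²)² ≥ C/4
        have hAM : -(K ^ 2 / (4 * P)) ≤ P / r ^ 12 - K / r ^ 6 := by
          have key : P / r ^ 12 - K / r ^ 6 + K ^ 2 / (4 * P) =
              (2 * P / r ^ 6 - K) ^ 2 / (4 * P) := by
            field_simp
            ring
          have h2 : 0 ≤ (2 * P / r ^ 6 - K) ^ 2 / (4 * P) := by positivity
          linarith
        have hC4 : C / 4 ≤ C / (1 + r ^ 2) ^ 2 := by
          apply div_le_div_of_nonneg_left hC.le (by positivity)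
          have hr2 : r ^ 2 ≤ 1 := by nlinarith
          nlinarith
        have : K ^ 2 / (4 * P) ≤ C / 4 := by
          rw [hCdef]; have : (0:ℝ) ≤ K := hK.le; linarith [hK]
        linarith
      · -- large r : K/r⁶ ≤ C/(1+r²)²
        have hP0 : 0 ≤ P / r ^ 12 := by positivity
        have hKr : K / r ^ 6 ≤ C / (1 + r ^ 2) ^ 2 := by
          rw [div_le_div_iff₀ (by positivity) (by positivity)]
          have h2 : 1 ≤ r ^ 2 := by nlinarith
          have h26 : r ^ 2 ≤ r ^ 6 := pow_le_pow_right₀ h1.le (by norm_num)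
          have h46 : r ^ 4 ≤ r ^ 6 := pow_le_pow_right₀ h1.le (by norm_num)
          have h16 : 1 ≤ r ^ 6 := h2.trans h26
          nlinarith [mul_le_mul_of_nonneg_left h26 hK.le,
            mul_le_mul_of_nonneg_left h46 hK.le,
            mul_le_mul_of_nonneg_right hC4K (pow_nonneg hr0.le 6)]
        linarith
    exact hfinal.trans hstep
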